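/- arXiv:2203.09703 — 5 statements merged into one kernel-verified Lean document; each statement's English description precedes it below -/
import Mathlib

section
/- Let f : R^n → R be differentiable and quasiconvex, let C ⊂ R^n be a nonempty finite set, and let x* ∈ C maximize f over C. Then ∇f(x*) belongs to the normal cone N_C(x*) = {v : ⟨v, y − x*⟩ ≤ 0 for all y ∈ C}. -/
open scoped RealInnerProductSpace

/-- If a differentiable quasiconvex function attains its maximum over a nonempty finite
set `C` at `x*`, then its gradient at `x*` lies in the normal cone of `C` at `x*`. -/
theorem gradient_mem_normalCone_of_finite_max (n : ℕ)
    (f : EuclideanSpace ℝ (Fin n) → ℝ)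
    (hdiff : Differentiable ℝ f)
    (hf : QuasiconvexOn ℝ Set.univ f)
    (C : Finset (EuclideanSpace ℝ (Fin n))) (hC : C.Nonempty)
    (xs : EuclideanSpace ℝ (Fin n)) (hxs : xs ∈ C)
    (hmax : ∀ y ∈ C, f y ≤ f xs) :
    ∀ y ∈ C, ⟪gradient f xs, y - xs⟫ ≤ 0 := by
  intro y hy
  have hconv : Convex ℝ {x ∈ Set.univ | f x ≤ f xs} := hf (f xs)
  have hseg : segment ℝ xs y ⊆ {x ∈ Set.univ | f x ≤ f xs} :=
    hconv.segment_subset ⟨trivial, le_refl _⟩ ⟨trivial, hmax y hy⟩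
  have hIsMax : IsMaxOn f (segment ℝ xs y) xs := fun z hz => (hseg hz).2
  have hmaxOn : IsLocalMaxOn f (segment ℝ xs y) xs := hIsMax.localize
  have htan : y - xs ∈ posTangentConeAt (segment ℝ xs y) xs :=
    sub_mem_posTangentConeAt_of_segment_subset subset_rfl
  have hfd : HasFDerivWithinAt f (InnerProductSpace.toDual ℝ _ (gradient f xs))
      (segment ℝ xs y) xs :=
    ((hdiff xs).hasGradientAt).hasFDerivAt.hasFDerivWithinAt
  have := hmaxOn.hasFDerivWithinAt_nonpos hfd htan
  simpa [InnerProductSpace.toDual_apply_apply] using this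
end

section
/- Sufficiency of KKT conditions under pseudoconvexity: Let f, g_1, …, g_m : R^n → R be differentiable, with −f pseudoconvex and each g_j quasiconvex. Let D ⊂ R^n be nonempty and C := {x ∈ D : g_j(x) ≤ 0, j = 1,…,m}. Suppose x* ∈ C and there exist λ_1, …, λ_m ≥ 0 with λ_j g_j(x*) = 0 for all j and ∇f(x*) ∈ N_D(x*) + λ_1 ∇g_1(x*) + ⋯ + λ_m ∇g_m(x*). Then f(x*) ≥ f(x) for all x ∈ C. -/
open scoped RealInnerProductSpace

lemma fderiv_eq_inner_gradient {n : ℕ} (f : EuclideanSpace ℝ (Fin n) → ℝ)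
    (_hf : Differentiable ℝ f) (y v : EuclideanSpace ℝ (Fin n)) :
    fderiv ℝ f y v = ⟪gradient f y, v⟫ := by
  rw [gradient, InnerProductSpace.toDual_symm_apply]

lemma quasi_grad {n : ℕ} (g : EuclideanSpace ℝ (Fin n) → ℝ)
    (hg : Differentiable ℝ g) (hq : QuasiconvexOn ℝ Set.univ g)
    (x y : EuclideanSpace ℝ (Fin n)) (h : g x ≤ g y) :
    ⟪gradient g y, x - y⟫ ≤ 0 := by
  set c := x - y with hc
  set φ : ℝ → ℝ := fun t => g (y + t • c) with hφ
  have hline : ∀ t : ℝ, HasDerivAt (fun t : ℝ => y + t • c) c t := by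
    intro t
    simpa using ((hasDerivAt_id t).smul_const c).const_add y
  have hder : HasDerivAt φ (fderiv ℝ g y c) 0 := by
    have := (hg (y + (0:ℝ) • c)).hasFDerivAt.comp_hasDerivAt 0 (hline 0)
    simp only [zero_smul, add_zero] at this
    exact this
  have hle : ∀ t ∈ Set.Ioc (0:ℝ) 1, φ t ≤ φ 0 := by
    intro t ht
    have hmem := (hq (g y)) (a := t) (b := 1 - t) ⟨Set.mem_univ x, h⟩ ⟨Set.mem_univ y, le_refl _⟩
      (le_of_lt ht.1) (by linarith [ht.2]) (by ring)
    have : t • x + (1 - t) • y = y + t • c := by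
      simp [hc, smul_sub]; module
    rw [this] at hmem
    simpa [hφ] using hmem.2
  have hslope : Filter.Tendsto (slope φ 0) (nhdsWithin 0 (Set.Ioi 0)) (nhds (fderiv ℝ g y c)) :=
    (hasDerivAt_iff_tendsto_slope.mp hder).mono_left
      (nhdsWithin_mono _ (fun t ht => ne_of_gt ht))
  have hfd : fderiv ℝ g y c ≤ 0 := by
    refine le_of_tendsto hslope ?_
    filter_upwards [Ioc_mem_nhdsGT_of_mem (by norm_num : (0:ℝ) ∈ Set.Ico (0:ℝ) 1)] with t ht
    have h1 : φ t - φ 0 ≤ 0 := sub_nonpos.mpr (hle t ht)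
    rw [slope_def_field, sub_zero]
    exact div_nonpos_of_nonpos_of_nonneg h1 ht.1.le
  rwa [fderiv_eq_inner_gradient g hg y c] at hfd

/-- Sufficiency of the KKT conditions when `-f` is pseudoconvex and the constraint
functions are quasiconvex. -/
theorem kkt_sufficient_pseudoconvex (n m : ℕ)
    (f : EuclideanSpace ℝ (Fin n) → ℝ)
    (g : Fin m → EuclideanSpace ℝ (Fin n) → ℝ)
    (hfdiff : Differentiable ℝ f)
    (hgdiff : ∀ j, Differentiable ℝ (g j))
    -- pseudoconvexity of -f : f(x) > f(y) implies ⟨∇f(y), x - y⟩ > 0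
    (hpseudo : ∀ x y : EuclideanSpace ℝ (Fin n), f y < f x → 0 < ⟪gradient f y, x - y⟫)
    (hquasi : ∀ j, QuasiconvexOn ℝ Set.univ (g j))
    (D : Set (EuclideanSpace ℝ (Fin n))) (hD : D.Nonempty)
    (xs : EuclideanSpace ℝ (Fin n))
    (hxsD : xs ∈ D) (hxsfeas : ∀ j, g j xs ≤ 0)
    (lam : Fin m → ℝ) (hlam : ∀ j, 0 ≤ lam j)
    (hcomp : ∀ j, lam j * g j xs = 0)
    (hkkt : ∃ v : EuclideanSpace ℝ (Fin n), (∀ y ∈ D, ⟪v, y - xs⟫ ≤ 0) ∧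
      gradient f xs = v + ∑ j, lam j • gradient (g j) xs) :
    ∀ x ∈ D, (∀ j, g j x ≤ 0) → f x ≤ f xs := by
  intro x hxD hxfeas
  by_contra hlt
  push_neg at hlt
  have hpos : 0 < ⟪gradient f xs, x - xs⟫ := hpseudo x xs hlt
  obtain ⟨v, hv, heq⟩ := hkkt
  have hterm : ∀ j, lam j * ⟪gradient (g j) xs, x - xs⟫ ≤ 0 := by
    intro j
    rcases eq_or_lt_of_le (hlam j) with h0 | h0
    · simp [← h0]
    · have hgz : g j xs = 0 := by
        have := hcomp j
        exact (mul_eq_zero.mp this).resolve_left (ne_of_gt h0)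
      have : g j x ≤ g j xs := by rw [hgz]; exact hxfeas j
      exact mul_nonpos_of_nonneg_of_nonpos (hlam j)
        (quasi_grad (g j) (hgdiff j) (hquasi j) x xs this) |>.trans le_rfl
  have hcalc : ⟪gradient f xs, x - xs⟫ =
      ⟪v, x - xs⟫ + ∑ j, lam j * ⟪gradient (g j) xs, x - xs⟫ := by
    rw [heq, inner_add_left, sum_inner]
    congr 1
    exact Finset.sum_congr rfl fun j _ => real_inner_smul_left _ _ _
  have hsum : ∑ j, lam j * ⟪gradient (g j) xs, x - xs⟫ ≤ 0 :=
    Finset.sum_nonpos fun j _ => hterm j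
  have := hv x hxD
  linarith
end

section
/- Let N ∈ {0,…,n}, f : R^n → R differentiable, C ⊂ {0,1}^n finite nonempty, and x ∈ C with ∇f(x) ≠ 0. Suppose (max_{y∈C} f(y) − f(x)) / ‖∇f(x)‖ > √N. Then any z ∈ {0,1}^n satisfying max_{y∈C} f(y) − f(x) ≤ ⟨∇f(x), z − x⟩ must satisfy ‖z − x‖ > √N; consequently, the number of binary vectors z ∈ {0,1}^n violating the linear inequality ⟨∇f(x), z − x⟩ ≥ max_{y∈C} f(y) − f(x) is at least ∑_{q=0}^{N} C(n, q). -/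
open scoped RealInnerProductSpace

/-- Embedding of binary vectors into Euclidean space. -/
noncomputable def binVec {n : ℕ} (b : Fin n → Bool) : EuclideanSpace ℝ (Fin n) :=
  WithLp.toLp 2 (fun i => if b i then (1 : ℝ) else 0)

lemma binVec_norm_sub {n : ℕ} (b c : Fin n → Bool) :
    ‖binVec b - binVec c‖ =
      Real.sqrt ((Finset.univ.filter (fun i => b i ≠ c i)).card) := by
  rw [EuclideanSpace.norm_eq]
  congr 1
  rw [Finset.card_filter]
  push_cast
  refine Finset.sum_congr rfl fun i _ => ?_
  have : (binVec b - binVec c) i = binVec b i - binVec c i := rfl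
  rw [this]
  cases hb : b i <;> cases hc : c i <;> simp [binVec, hb, hc]

/-- If `(max_C f − f(x))/‖∇f(x)‖ > √N`, then every binary vector satisfying the
optimality cut is at distance more than `√N` from `x`, and the cut removes at least
`∑_{q=0}^N C(n,q)` binary vectors. -/
theorem optimality_cut_removes_points (n N : ℕ) (hN : N ≤ n)
    (f : EuclideanSpace ℝ (Fin n) → ℝ) (hdiff : Differentiable ℝ f)
    (C : Finset (EuclideanSpace ℝ (Fin n))) (hCne : C.Nonempty)
    (hCbin : ∀ y ∈ C, ∀ i, y i = 0 ∨ y i = 1)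
    (x : EuclideanSpace ℝ (Fin n)) (hx : x ∈ C)
    (hgrad : gradient f x ≠ 0)
    (Mv : ℝ) (hMv : IsGreatest (f '' (C : Set (EuclideanSpace ℝ (Fin n)))) Mv)
    (hratio : Real.sqrt N < (Mv - f x) / ‖gradient f x‖) :
    (∀ z : EuclideanSpace ℝ (Fin n), (∀ i, z i = 0 ∨ z i = 1) →
        Mv - f x ≤ ⟪gradient f x, z - x⟫ → Real.sqrt N < ‖z - x‖) ∧
    ∑ q ∈ Finset.range (N + 1), Nat.choose n q ≤
      (Finset.univ.filter
        (fun b : Fin n → Bool => ⟪gradient f x, binVec b - x⟫ < Mv - f x)).card := by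
  have hg : (0:ℝ) < ‖gradient f x‖ := norm_pos_iff.mpr hgrad
  have h1 : Real.sqrt N * ‖gradient f x‖ < Mv - f x := (lt_div_iff₀ hg).mp hratio
  have part1 : ∀ z : EuclideanSpace ℝ (Fin n), (∀ i, z i = 0 ∨ z i = 1) →
      Mv - f x ≤ ⟪gradient f x, z - x⟫ → Real.sqrt N < ‖z - x‖ := by
    intro z _ hle
    have h2 : Mv - f x ≤ ‖gradient f x‖ * ‖z - x‖ :=
      hle.trans (real_inner_le_norm _ _)
    nlinarith
  refine ⟨part1, ?_⟩
  -- x is a binary vector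
  set bx : Fin n → Bool := fun i => decide (x i = 1) with hbx
  have hxbin : x = binVec bx := by
    ext i
    rcases hCbin x hx i with h | h <;> simp [binVec, hbx, h]
  -- Φ maps subsets to binary vectors flipping bx on the subset
  set Φ : Finset (Fin n) → (Fin n → Bool) :=
    fun s i => xor (decide (i ∈ s)) (bx i) with hΦ
  have hdiff' : ∀ s : Finset (Fin n),
      Finset.univ.filter (fun i => Φ s i ≠ bx i) = s := by
    intro s
    ext i
    simp only [Finset.mem_filter, Finset.mem_univ, true_and, hΦ]
    by_cases hi : i ∈ s <;> cases hb : bx i <;> simp [hi, hb]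
  set A : Finset (Finset (Fin n)) :=
    Finset.univ.filter (fun s : Finset (Fin n) => s.card ≤ N) with hA
  have hAcard : A.card = ∑ q ∈ Finset.range (N + 1), Nat.choose n q := by
    have : A = (Finset.range (N+1)).biUnion
        (fun q => Finset.univ.powersetCard q) := by
      ext s
      simp only [hA, Finset.mem_filter, Finset.mem_univ, true_and,
        Finset.mem_biUnion, Finset.mem_range, Finset.mem_powersetCard,
        Nat.lt_succ_iff]
      constructor
      · intro h; exact ⟨s.card, h, Finset.subset_univ s, rfl⟩
      · rintro ⟨q, hq, -, rfl⟩; exact hq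
    rw [this, Finset.card_biUnion]
    · refine Finset.sum_congr rfl fun q _ => ?_
      simp [Finset.card_powersetCard]
    · intro q _ r _ hqr
      simp only [Function.onFun_apply, Finset.disjoint_left]
      intro s hs hs'
      rw [Finset.mem_powersetCard] at hs hs'
      exact hqr (hs.2 ▸ hs'.2)
  rw [← hAcard]
  apply Finset.card_le_card_of_injOn Φ
  · intro s hs
    rw [hA, Finset.mem_coe, Finset.mem_filter] at hs
    simp only [Finset.mem_coe, Finset.mem_filter, Finset.mem_univ, true_and]
    by_contra hcontra
    push_neg at hcontra
    have := part1 (binVec (Φ s)) (fun i => by unfold binVec; simp only [WithLp.ofLp_toLp]; split <;> simp) hcontra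
    rw [hxbin, binVec_norm_sub, hdiff' s] at this
    exact absurd this (not_lt.mpr (Real.sqrt_le_sqrt (Nat.cast_le.mpr hs.2)))
  · intro s _ t _ h
    ext i
    have := congrFun h i
    simp only [hΦ] at this
    cases hb : bx i <;> rw [hb] at this <;>
      simpa [decide_eq_decide] using this
end

section
/- Dimension-reduction criterion: Let c ∈ R^n, x ∈ {0,1}^n, and define S_1^+ = {i : x_i = 1, c_i > 0}, S_0^+ = {i : x_i = 0, c_i > 0}, S_1^- = {i : x_i = 1, c_i ≤ 0}, S_0^- = {i : x_i = 0, c_i ≤ 0}. Suppose i⁺ ∈ S_1^+ satisfies c_{i⁺} > ∑_{i∈S_0^+} c_i − ∑_{i∈S_1^-} c_i. Then every z ∈ {0,1}^n with ⟨c, z⟩ ≥ ⟨c, x⟩ satisfies z_{i⁺} = 1. -/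
open Classical in
/-- Dimension-reduction criterion (first part): if the coefficient `c i⁺` (with
`x_{i⁺} = 1`, `c_{i⁺} > 0`) dominates the maximal possible gain from the remaining
indices, then every binary `z` with `⟨c,z⟩ ≥ ⟨c,x⟩` has `z_{i⁺} = 1`. -/
theorem dimension_reduction_fix_one (n : ℕ) (c x : Fin n → ℝ)
    (hx : ∀ i, x i = 0 ∨ x i = 1)
    (ip : Fin n) (hip1 : x ip = 1) (hipc : 0 < c ip)
    (hdom : (∑ i ∈ Finset.univ.filter (fun i => x i = 0 ∧ 0 < c i), c i)
        - (∑ i ∈ Finset.univ.filter (fun i => x i = 1 ∧ c i ≤ 0), c i) < c ip) :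
    ∀ z : Fin n → ℝ, (∀ i, z i = 0 ∨ z i = 1) →
      (∑ i, c i * x i) ≤ (∑ i, c i * z i) → z ip = 1 := by
  intro z hz hle
  by_contra hzip
  have hzip0 : z ip = 0 := (hz ip).resolve_right hzip
  set A := ∑ i ∈ Finset.univ.filter (fun i => x i = 1 ∧ 0 < c i), c i with hA
  set B := ∑ i ∈ Finset.univ.filter (fun i => x i = 0 ∧ 0 < c i), c i with hB
  set C := ∑ i ∈ Finset.univ.filter (fun i => x i = 1 ∧ c i ≤ 0), c i with hC
  -- ⟨c,x⟩ = A + C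
  have hx1 : (∑ i, c i * x i) = A + C := by
    have h1 : (∑ i, c i * x i)
        = ∑ i ∈ Finset.univ.filter (fun i => x i = 1), c i := by
      rw [Finset.sum_filter]
      apply Finset.sum_congr rfl
      intro i _
      rcases hx i with h | h <;> simp [h]
    rw [h1, ← Finset.sum_filter_add_sum_filter_not _ (fun i => 0 < c i),
      Finset.filter_filter, Finset.filter_filter]
    congr 1 <;>
    · apply Finset.sum_congr _ (fun _ _ => rfl)
      apply Finset.filter_congr; intro i _; simp [not_lt]
  -- ∑ max 0 (c i) = A + B
  have hmax : (∑ i, max 0 (c i)) = A + B := by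
    have h1 : (∑ i, max 0 (c i))
        = ∑ i ∈ Finset.univ.filter (fun i => 0 < c i), c i := by
      rw [Finset.sum_filter]
      apply Finset.sum_congr rfl
      intro i _
      by_cases h : 0 < c i
      · simp [h, max_eq_right h.le]
      · simp [h, max_eq_left (not_lt.mp h)]
    rw [h1, ← Finset.sum_filter_add_sum_filter_not _ (fun i => x i = 1),
      Finset.filter_filter, Finset.filter_filter]
    congr 1
    · apply Finset.sum_congr _ (fun _ _ => rfl)
      apply Finset.filter_congr; intro i _; tauto
    · apply Finset.sum_congr _ (fun _ _ => rfl)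
      apply Finset.filter_congr; intro i _
      rcases hx i with h | h <;> simp [h]
  -- ⟨c,z⟩ ≤ A + B - c ip
  have hz1 : (∑ i, c i * z i) ≤ A + B - c ip := by
    have hterm : ∀ i ∈ Finset.univ.erase ip, c i * z i ≤ max 0 (c i) := by
      intro i _
      rcases hz i with h | h
      · simp [h]
      · simp only [h, mul_one]; exact le_max_right _ _
    have h1 : (∑ i, c i * z i) = ∑ i ∈ Finset.univ.erase ip, c i * z i := by
      rw [← Finset.add_sum_erase _ _ (Finset.mem_univ ip), hzip0]
      ring_nf
    have h2 : (∑ i ∈ Finset.univ.erase ip, max 0 (c i))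
        = (∑ i, max 0 (c i)) - max 0 (c ip) := by
      rw [← Finset.add_sum_erase _ _ (Finset.mem_univ ip)]
      ring
    calc (∑ i, c i * z i) ≤ ∑ i ∈ Finset.univ.erase ip, max 0 (c i) := by
          rw [h1]; exact Finset.sum_le_sum hterm
      _ = (∑ i, max 0 (c i)) - max 0 (c ip) := h2
      _ = A + B - c ip := by rw [hmax, max_eq_right hipc.le]
  rw [hx1] at hle
  linarith
end

section
/- Dimension-reduction criterion (second part): With c ∈ R^n, x ∈ {0,1}^n, and index sets S_1^+, S_0^+, S_1^-, S_0^- as defined (S_1^+ = {i : x_i=1, c_i>0}, S_0^+ = {i : x_i=0, c_i>0}, S_1^- = {i : x_i=1, c_i≤0}, S_0^- = {i : x_i=0, c_i≤0}), suppose i⁻ ∈ S_0^- satisfies c_{i⁻} < −∑_{i∈S_0^+} c_i + ∑_{i∈S_1^-} c_i. Then every z ∈ {0,1}^n with ⟨c, z⟩ ≥ ⟨c, x⟩ satisfies z_{i⁻} = 0. -/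
open Classical in
/-- Dimension-reduction criterion (second part): if the coefficient `c i⁻` (with
`x_{i⁻} = 0`, `c_{i⁻} ≤ 0`) is strictly below the minimal possible change from the
remaining indices, then every binary `z` with `⟨c,z⟩ ≥ ⟨c,x⟩` has `z_{i⁻} = 0`. -/
theorem dimension_reduction_fix_zero (n : ℕ) (c x : Fin n → ℝ)
    (hx : ∀ i, x i = 0 ∨ x i = 1)
    (im : Fin n) (him0 : x im = 0) (himc : c im ≤ 0)
    (hdom : c im < -(∑ i ∈ Finset.univ.filter (fun i => x i = 0 ∧ 0 < c i), c i)
        + (∑ i ∈ Finset.univ.filter (fun i => x i = 1 ∧ c i ≤ 0), c i)) :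
    ∀ z : Fin n → ℝ, (∀ i, z i = 0 ∨ z i = 1) →
      (∑ i, c i * x i) ≤ (∑ i, c i * z i) → z im = 0 := by
  intro z hz hle
  by_contra hzim
  have hzim1 : z im = 1 := (hz im).resolve_left hzim
  -- ⟨c,x⟩ as sum over x = 1
  have hx_eq : (∑ i, c i * x i) = ∑ i ∈ Finset.univ.filter (fun i => x i = 1), c i := by
    rw [Finset.sum_filter]
    apply Finset.sum_congr rfl
    intro i _
    rcases hx i with h | h <;> simp [h]
  -- split x=1 sum by sign of c
  have hsplit1 : (∑ i ∈ Finset.univ.filter (fun i => x i = 1), c i)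
      = (∑ i ∈ Finset.univ.filter (fun i => x i = 1 ∧ 0 < c i), c i)
        + (∑ i ∈ Finset.univ.filter (fun i => x i = 1 ∧ c i ≤ 0), c i) := by
    rw [← Finset.sum_filter_add_sum_filter_not (Finset.univ.filter (fun i => x i = 1))
      (fun i => 0 < c i), Finset.filter_filter, Finset.filter_filter]
    congr 1
    apply Finset.sum_congr _ (fun _ _ => rfl)
    apply Finset.filter_congr
    intro i _
    simp [not_lt]
  -- split positive-c sum by value of x
  have hsplit2 : (∑ i ∈ Finset.univ.filter (fun i => 0 < c i), c i)
      = (∑ i ∈ Finset.univ.filter (fun i => x i = 1 ∧ 0 < c i), c i)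
        + (∑ i ∈ Finset.univ.filter (fun i => x i = 0 ∧ 0 < c i), c i) := by
    rw [← Finset.sum_filter_add_sum_filter_not (Finset.univ.filter (fun i => 0 < c i))
      (fun i => x i = 1), Finset.filter_filter, Finset.filter_filter]
    congr 1
    · apply Finset.sum_congr _ (fun _ _ => rfl)
      apply Finset.filter_congr
      intro i _
      constructor
      · rintro ⟨h1, h2⟩; exact ⟨h2, h1⟩
      · rintro ⟨h1, h2⟩; exact ⟨h2, h1⟩
    · apply Finset.sum_congr _ (fun _ _ => rfl)
      apply Finset.filter_congr
      intro i _
      rcases hx i with h | h <;> simp [h]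
  -- upper bound on ⟨c,z⟩
  have hz_le : (∑ i, c i * z i)
      ≤ (∑ i ∈ Finset.univ.filter (fun i => 0 < c i), c i) + c im := by
    rw [← Finset.sum_filter_add_sum_filter_not Finset.univ (fun i => 0 < c i)
      (fun i => c i * z i)]
    have h1 : (∑ i ∈ Finset.univ.filter (fun i => 0 < c i), c i * z i)
        ≤ ∑ i ∈ Finset.univ.filter (fun i => 0 < c i), c i := by
      apply Finset.sum_le_sum
      intro i hi
      have hc : 0 < c i := (Finset.mem_filter.mp hi).2
      rcases hz i with h | h <;> simp [h] <;> linarith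
    have him_mem : im ∈ Finset.univ.filter (fun i => ¬ 0 < c i) := by
      simp only [Finset.mem_filter, Finset.mem_univ, true_and, not_lt]
      exact himc
    have h2 : (∑ i ∈ Finset.univ.filter (fun i => ¬ 0 < c i), c i * z i) ≤ c im := by
      rw [← Finset.add_sum_erase _ _ him_mem, hzim1, mul_one]
      have : (∑ i ∈ (Finset.univ.filter (fun i => ¬ 0 < c i)).erase im, c i * z i) ≤ 0 := by
        apply Finset.sum_nonpos
        intro i hi
        have hc : c i ≤ 0 := not_lt.mp (Finset.mem_filter.mp (Finset.mem_of_mem_erase hi)).2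
        rcases hz i with h | h <;> simp [h] <;> linarith
      linarith
    linarith
  rw [hx_eq, hsplit1] at hle
  rw [hsplit2] at hz_le
  linarith
end
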